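/- With the exponentially weighted aggregation weights α̂_{i,t} = exp(-η Σ_{s<t}(x̂_s^{(i)}-x_s)²)/Σ_k exp(-η Σ_{s<t}(x̂_s^{(k)}-x_s)²), for each t the inequality (x̂_t - x_t)² ≤ -(1/η) log( Σ_{i=1}^N α̂_{i,t} exp(-η(x̂_t^{(i)} - x_t)²) ) + (y_t² - 1/(2η))₊ holds, where x̂_t = Σ_i α̂_{i,t} x̂_t^{(i)} and y_t = |x_t| + max_i |x̂_t^{(i)}|. -/

import Mathlib

open Finset


lemma concave_exp_neg_mul_sq {μ b : ℝ} (hμ : 0 < μ) (hb : 2 * μ * b ^ 2 ≤ 1) :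
    ConcaveOn ℝ (Set.Icc (-b) b) (fun v => Real.exp (-μ * v ^ 2)) := by
  have hd1 : ∀ v : ℝ, HasDerivAt (fun v => Real.exp (-μ * v ^ 2))
      (Real.exp (-μ * v ^ 2) * (-μ * (2 * v))) v := by
    intro v
    have h1 : HasDerivAt (fun v : ℝ => -μ * v ^ 2) (-μ * (2 * v)) v := by
      simpa using ((hasDerivAt_pow 2 v).const_mul (-μ))
    exact h1.exp
  have hderiv : deriv (fun v => Real.exp (-μ * v ^ 2))
      = fun v => Real.exp (-μ * v ^ 2) * (-μ * (2 * v)) := by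
    funext v; exact (hd1 v).deriv
  have hd2 : ∀ v : ℝ, HasDerivAt (fun v => Real.exp (-μ * v ^ 2) * (-μ * (2 * v)))
      (Real.exp (-μ * v ^ 2) * (4 * μ ^ 2 * v ^ 2 - 2 * μ)) v := by
    intro v
    have h2 : HasDerivAt (fun v : ℝ => -μ * (2 * v)) (-μ * 2) v := by
      simpa using ((hasDerivAt_id v).const_mul (2 : ℝ)).const_mul (-μ)
    have := (hd1 v).fun_mul h2
    refine this.congr_deriv ?_
    ring
  apply concaveOn_of_deriv2_nonpos' (convex_Icc _ _)
  · intro v _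
    exact (hd1 v).differentiableAt.differentiableWithinAt
  · rw [hderiv]
    intro v _
    exact (hd2 v).differentiableAt.differentiableWithinAt
  · intro v hv
    have hv2 : v ^ 2 ≤ b ^ 2 := sq_le_sq' hv.1 hv.2
    have : deriv^[2] (fun v => Real.exp (-μ * v ^ 2)) v
        = Real.exp (-μ * v ^ 2) * (4 * μ ^ 2 * v ^ 2 - 2 * μ) := by
      rw [Function.iterate_succ, Function.iterate_one, Function.comp_apply, hderiv]
      exact (hd2 v).deriv
    rw [this]
    have hexp := Real.exp_pos (-μ * v ^ 2)
    have h3 : 4 * μ ^ 2 * v ^ 2 - 2 * μ ≤ 0 := by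
      nlinarith [mul_le_mul_of_nonneg_left hv2 hμ.le]
    exact mul_nonpos_of_nonneg_of_nonpos hexp.le h3

lemma key_discrete (N : ℕ) (α v : Fin N → ℝ) (η b : ℝ) (hη : 0 < η) (hb : 0 ≤ b)
    (hα : ∀ i, 0 ≤ α i) (hsum : ∑ i, α i = 1) (hv : ∀ i, |v i| ≤ b) :
    ∑ i, α i * Real.exp (-η * (v i) ^ 2) ≤
      Real.exp (-η * (∑ i, α i * v i) ^ 2 + max (η * b ^ 2 - 1/2) 0) := by
  have hmem : ∀ i : Fin N, v i ∈ Set.Icc (-b) b := fun i => abs_le.mp (hv i)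
  have hbar : |∑ i, α i * v i| ≤ b := by
    calc |∑ i, α i * v i| ≤ ∑ i, |α i * v i| := Finset.abs_sum_le_sum_abs _ _
      _ ≤ ∑ i, α i * b := by
          apply Finset.sum_le_sum
          intro i _
          rw [abs_mul, abs_of_nonneg (hα i)]
          exact mul_le_mul_of_nonneg_left (hv i) (hα i)
      _ = b := by rw [← Finset.sum_mul, hsum, one_mul]
  have hbar2 : (∑ i, α i * v i) ^ 2 ≤ b ^ 2 := sq_le_sq' (abs_le.mp hbar).1 (abs_le.mp hbar).2
  by_cases hcase : 2 * η * b ^ 2 ≤ 1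
  · have hconc := concave_exp_neg_mul_sq hη hcase
    have hJ := hconc.le_map_sum (t := Finset.univ) (fun i _ => hα i) hsum (fun i _ => hmem i)
    simp only [smul_eq_mul] at hJ
    have hmax : max (η * b ^ 2 - 1/2) 0 = 0 := max_eq_right (by linarith)
    rw [hmax, add_zero]
    exact hJ
  · push_neg at hcase
    have hb0 : 0 < b := by
      rcases hb.lt_or_eq with h | h
      · exact h
      · exfalso; rw [← h] at hcase; nlinarith
    set μ := 1 / (2 * b ^ 2) with hμdef
    have hμ : 0 < μ := by positivity
    have hμη : μ ≤ η := by
      rw [hμdef, div_le_iff₀ (by positivity)]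
      nlinarith
    have hμb : 2 * μ * b ^ 2 ≤ 1 := by
      rw [hμdef]; field_simp; exact le_rfl
    have hconc := concave_exp_neg_mul_sq hμ hμb
    have hJ := hconc.le_map_sum (t := Finset.univ) (fun i _ => hα i) hsum (fun i _ => hmem i)
    simp only [smul_eq_mul] at hJ
    calc ∑ i, α i * Real.exp (-η * (v i) ^ 2)
        ≤ ∑ i, α i * Real.exp (-μ * (v i) ^ 2) := by
          apply Finset.sum_le_sum
          intro i _
          apply mul_le_mul_of_nonneg_left _ (hα i)
          apply Real.exp_le_exp.mpr
          nlinarith [sq_nonneg (v i)]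
      _ ≤ Real.exp (-μ * (∑ i, α i * v i) ^ 2) := hJ
      _ ≤ Real.exp (-η * (∑ i, α i * v i) ^ 2 + max (η * b ^ 2 - 1/2) 0) := by
          apply Real.exp_le_exp.mpr
          have hmax : max (η * b ^ 2 - 1/2) 0 = η * b ^ 2 - 1/2 := max_eq_left (by nlinarith)
          rw [hmax]
          have hμb' : μ * b ^ 2 = 1/2 := by rw [hμdef]; field_simp
          nlinarith [hbar2]


/-- Per-step inequality for exponentially weighted aggregation with the quadratic
loss: with weights `w i t ∝ exp(-η ∑_{s<t} (xh i s - x s)²)`, for each `t`,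
`(agg t - x t)² ≤ -(1/η) log(∑ i, w i t exp(-η (xh i t - x t)²)) + (y t² - 1/(2η))₊`
where `agg t = ∑ i, w i t * xh i t` and `y t = |x t| + max_i |xh i t|`. -/
theorem aggregation_quadratic_loss_per_step
    (N : ℕ) (hN : 0 < N) (η : ℝ) (hη : 0 < η)
    (x : ℕ → ℝ) (xh : Fin N → ℕ → ℝ)
    (w : Fin N → ℕ → ℝ)
    (hw : ∀ i t, w i t =
      Real.exp (-η * ∑ s ∈ range t, (xh i s - x s) ^ 2) /
        ∑ k : Fin N, Real.exp (-η * ∑ s ∈ range t, (xh k s - x s) ^ 2))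
    (agg : ℕ → ℝ) (hagg : ∀ t, agg t = ∑ i : Fin N, w i t * xh i t)
    (y : ℕ → ℝ) (hy : ∀ t, y t = |x t| + ⨆ i : Fin N, |xh i t|)
    (t : ℕ) :
    (agg t - x t) ^ 2 ≤
      -(1 / η) * Real.log (∑ i : Fin N, w i t * Real.exp (-η * (xh i t - x t) ^ 2)) +
        max ((y t) ^ 2 - 1 / (2 * η)) 0 := by
  haveI : Nonempty (Fin N) := Fin.pos_iff_nonempty.mp hN
  -- denominator positivity
  have hden : 0 < ∑ k : Fin N, Real.exp (-η * ∑ s ∈ range t, (xh k s - x s) ^ 2) :=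
    Finset.sum_pos (fun k _ => Real.exp_pos _) Finset.univ_nonempty
  have hwpos : ∀ i, 0 < w i t := by
    intro i; rw [hw]; exact div_pos (Real.exp_pos _) hden
  have hwsum : ∑ i : Fin N, w i t = 1 := by
    have : ∑ i : Fin N, w i t =
        (∑ i : Fin N, Real.exp (-η * ∑ s ∈ range t, (xh i s - x s) ^ 2)) /
          ∑ k : Fin N, Real.exp (-η * ∑ s ∈ range t, (xh k s - x s) ^ 2) := by
      rw [Finset.sum_div]; exact Finset.sum_congr rfl fun i _ => hw i t
    rw [this, div_self hden.ne']
  -- bound on the prediction differences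
  have hy0 : 0 ≤ ⨆ i : Fin N, |xh i t| :=
    Real.iSup_nonneg (fun i => abs_nonneg _)
  have hb : 0 ≤ y t := by rw [hy]; positivity
  have hvb : ∀ i : Fin N, |xh i t - x t| ≤ y t := by
    intro i
    have h1 : |xh i t| ≤ ⨆ j : Fin N, |xh j t| :=
      le_ciSup (Set.Finite.bddAbove (Set.finite_range (fun j : Fin N => |xh j t|))) i
    calc |xh i t - x t| ≤ |xh i t| + |x t| := abs_sub _ _
      _ ≤ y t := by rw [hy]; linarith
  -- aggregate difference as convex combination
  have haggdiff : agg t - x t = ∑ i : Fin N, w i t * (xh i t - x t) := by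
    rw [hagg]
    calc ∑ i : Fin N, w i t * xh i t - x t
        = ∑ i : Fin N, w i t * xh i t - ∑ i : Fin N, w i t * x t := by
          rw [← Finset.sum_mul, hwsum, one_mul]
      _ = ∑ i : Fin N, (w i t * xh i t - w i t * x t) := (Finset.sum_sub_distrib _ _).symm
      _ = ∑ i : Fin N, w i t * (xh i t - x t) := by simp [mul_sub]
  -- key inequality
  have hkey := key_discrete N (fun i => w i t) (fun i => xh i t - x t) η (y t) hη hb
    (fun i => (hwpos i).le) hwsum hvb
  rw [← haggdiff] at hkey
  have hSpos : 0 < ∑ i : Fin N, w i t * Real.exp (-η * (xh i t - x t) ^ 2) :=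
    Finset.sum_pos (fun i _ => mul_pos (hwpos i) (Real.exp_pos _)) Finset.univ_nonempty
  have hlog : Real.log (∑ i : Fin N, w i t * Real.exp (-η * (xh i t - x t) ^ 2)) ≤
      -η * (agg t - x t) ^ 2 + max (η * (y t) ^ 2 - 1/2) 0 :=
    (Real.log_le_iff_le_exp hSpos).mpr hkey
  have hmaxdiv : max (η * (y t) ^ 2 - 1/2) 0 / η = max ((y t) ^ 2 - 1 / (2 * η)) 0 := by
    rcases le_total (η * (y t) ^ 2 - 1/2) 0 with h | h
    · rw [max_eq_right h, max_eq_right, zero_div]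
      rw [sub_nonpos, le_div_iff₀ (by positivity)]
      nlinarith
    · rw [max_eq_left h, max_eq_left]
      · field_simp
      · rw [sub_nonneg, div_le_iff₀ (by positivity)]
        nlinarith
  set L := Real.log (∑ i : Fin N, w i t * Real.exp (-η * (xh i t - x t) ^ 2)) with hL
  have h1 : η * (agg t - x t) ^ 2 ≤ -L + max (η * (y t) ^ 2 - 1/2) 0 := by linarith
  have h2 : (agg t - x t) ^ 2 ≤ (-L + max (η * (y t) ^ 2 - 1/2) 0) / η := by
    rw [le_div_iff₀ hη]; linarith
  calc (agg t - x t) ^ 2 ≤ (-L + max (η * (y t) ^ 2 - 1/2) 0) / η := h2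
    _ = -(1/η) * L + max (η * (y t) ^ 2 - 1/2) 0 / η := by ring
    _ = -(1/η) * L + max ((y t) ^ 2 - 1 / (2 * η)) 0 := by rw [hmaxdiv]
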